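/- There exists σ̄ > 0 such that for every σ ∈ [0, σ̄], the regular solution v_σ satisfies v_σ(ζ) > 0 for all ζ ≥ 0 and v_σ(ζ) → +∞ as ζ → +∞. -/

import Mathlib

open Filter Set

/-- A regular solution of the singular ODE
`-ζ·v'' - v'/(m-2) + B·ζ^{m/(m-2)}·v = σ·v` on `(0,∞)`:
continuously differentiable on `[0,∞)`, twice continuously differentiable on
`(0,∞)`, and normalized by `v 0 = 1`. -/
def RegSol (m B σ : ℝ) (v : ℝ → ℝ) : Prop :=
  ContDiffOn ℝ 1 v (Set.Ici 0) ∧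
  ContDiffOn ℝ 2 v (Set.Ioi 0) ∧
  (∀ ζ : ℝ, 0 < ζ →
    -ζ * deriv (deriv v) ζ - deriv v ζ / (m - 2)
      + B * ζ ^ (m / (m - 2)) * v ζ = σ * v ζ) ∧
  v 0 = 1

namespace Stmt9Aux

open MeasureTheory intervalIntegral
open scoped NNReal ENNReal

lemma cont_rpow {c : ℝ} (hc : 0 ≤ c) : Continuous fun t : ℝ => t ^ c := by
  rw [continuous_iff_continuousAt]
  intro x
  exact Real.continuousAt_rpow_const x c (Or.inr hc)

lemma contAt_rpow {c x : ℝ} (hx : x ≠ 0) : ContinuousAt (fun t : ℝ => t ^ c) x :=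
  Real.continuousAt_rpow_const x c (Or.inl hx)

lemma integral_rpow0 {c x : ℝ} (hc : -1 < c) :
    ∫ t in (0:ℝ)..x, t ^ c = x ^ (c+1) / (c+1) := by
  rw [integral_rpow (Or.inl hc), Real.zero_rpow (by linarith)]
  ring

noncomputable def kk (a B σ : ℝ) (v : ℝ → ℝ) : ℝ → ℝ :=
  fun t => t ^ (a-1) * ((B * t ^ (1+2*a) - σ) * v t)

noncomputable def Fv (a B σ : ℝ) (v : ℝ → ℝ) (s : ℝ) : ℝ :=
  ∫ t in (0:ℝ)..s, kk a B σ v t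

noncomputable def ok (a B σ : ℝ) (v : ℝ → ℝ) : ℝ → ℝ :=
  fun s => s ^ (-a) * Fv a B σ v s

noncomputable def Iv (a B σ : ℝ) (v : ℝ → ℝ) (ζ : ℝ) : ℝ :=
  ∫ s in (0:ℝ)..ζ, ok a B σ v s

noncomputable def Gw (a B σ : ℝ) (ζ : ℝ) : ℝ :=
  B * ζ ^ (2*a+2) / ((3*a+1)*(2*a+2)) + σ * ζ / a

variable {a B σ : ℝ} {v : ℝ → ℝ}

lemma gv_cont (ha : 0 < a) (hv : Continuous v) :
    Continuous fun t : ℝ => (B * t ^ (1+2*a) - σ) * v t :=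
  ((continuous_const.mul (cont_rpow (by linarith))).sub continuous_const).mul hv

lemma kk_int (ha : 0 < a) (hv : Continuous v) (x y : ℝ) :
    IntervalIntegrable (kk a B σ v) volume x y :=
  (intervalIntegrable_rpow' (by linarith)).mul_continuousOn (gv_cont ha hv).continuousOn

lemma Fv_cont (ha : 0 < a) (hv : Continuous v) : Continuous (Fv a B σ v) :=
  intervalIntegral.continuous_primitive (fun x y => kk_int ha hv x y) 0

lemma ok_int (ha : 0 < a) (ha1 : a < 1) (hv : Continuous v) (x y : ℝ) :
    IntervalIntegrable (ok a B σ v) volume x y :=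
  (intervalIntegrable_rpow' (by linarith)).mul_continuousOn (Fv_cont ha hv).continuousOn

lemma Iv_cont (ha : 0 < a) (ha1 : a < 1) (hv : Continuous v) : Continuous (Iv a B σ v) :=
  intervalIntegral.continuous_primitive (fun x y => ok_int ha ha1 hv x y) 0

lemma rpow_mul_rpow {t p q : ℝ} (ht : 0 ≤ t) (hpq : p + q ≠ 0) :
    t ^ p * t ^ q = t ^ (p + q) :=
  (Real.rpow_add' ht hpq).symm

/-- Pointwise bound on the inner integrand. -/
lemma kk_abs_le (ha : 0 < a) (hB : 0 ≤ B) (hσ : 0 ≤ σ) {t K : ℝ} (ht : 0 ≤ t)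
    (hK : |v t| ≤ K) :
    |kk a B σ v t| ≤ K * B * t ^ (3*a) + K * σ * t ^ (a-1) := by
  have hX : (0:ℝ) ≤ t ^ (a-1) := Real.rpow_nonneg ht _
  have hP : (0:ℝ) ≤ t ^ (1+2*a) := Real.rpow_nonneg ht _
  have hXP : t ^ (a-1) * t ^ (1+2*a) = t ^ (3*a) := by
    rw [rpow_mul_rpow ht (by linarith)]
    congr 1
    ring
  have h1 : |kk a B σ v t| = t ^ (a-1) * (|B * t ^ (1+2*a) - σ| * |v t|) := by
    rw [kk, abs_mul, abs_mul, abs_of_nonneg hX]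
  have h2 : |B * t ^ (1+2*a) - σ| ≤ B * t ^ (1+2*a) + σ := by
    refine (abs_sub _ _).trans ?_
    rw [abs_of_nonneg (by positivity), abs_of_nonneg hσ]
  have hK0 : 0 ≤ K := le_trans (abs_nonneg _) hK
  calc |kk a B σ v t| = t ^ (a-1) * (|B * t ^ (1+2*a) - σ| * |v t|) := h1
    _ ≤ t ^ (a-1) * ((B * t ^ (1+2*a) + σ) * K) := by
        apply mul_le_mul_of_nonneg_left _ hX
        apply mul_le_mul h2 hK (abs_nonneg _) (by positivity)
    _ = K * B * (t ^ (a-1) * t ^ (1+2*a)) + K * σ * t ^ (a-1) := by ring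
    _ = K * B * t ^ (3*a) + K * σ * t ^ (a-1) := by rw [hXP]

lemma Fv_abs_le (ha : 0 < a) (hB : 0 ≤ B) (hσ : 0 ≤ σ) (hv : Continuous v) {s K : ℝ}
    (hs : 0 ≤ s) (hK : ∀ t ∈ Icc 0 s, |v t| ≤ K) :
    |Fv a B σ v s| ≤ K * (B * s ^ (3*a+1) / (3*a+1) + σ * s ^ a / a) := by
  have int2 : IntervalIntegrable (fun t : ℝ => K * B * t ^ (3*a) + K * σ * t ^ (a-1))
      volume 0 s :=
    ((intervalIntegrable_rpow' (by linarith)).const_mul _).add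
      ((intervalIntegrable_rpow' (by linarith)).const_mul _)
  have h1 : |Fv a B σ v s| ≤ ∫ t in (0:ℝ)..s, |kk a B σ v t| :=
    intervalIntegral.abs_integral_le_integral_abs hs
  have h2 : (∫ t in (0:ℝ)..s, |kk a B σ v t|)
      ≤ ∫ t in (0:ℝ)..s, (K * B * t ^ (3*a) + K * σ * t ^ (a-1)) := by
    refine integral_mono_on hs ((kk_int ha hv 0 s).abs) int2 ?_
    intro t ht
    exact kk_abs_le ha hB hσ ht.1 (hK t ht)
  have h3 : (∫ t in (0:ℝ)..s, (K * B * t ^ (3*a) + K * σ * t ^ (a-1)))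
      = K * (B * s ^ (3*a+1) / (3*a+1) + σ * s ^ a / a) := by
    rw [integral_add ((intervalIntegrable_rpow' (by linarith)).const_mul _)
      ((intervalIntegrable_rpow' (by linarith)).const_mul _),
      intervalIntegral.integral_const_mul, intervalIntegral.integral_const_mul,
      integral_rpow0 (by linarith), integral_rpow0 (by linarith)]
    rw [show a - 1 + 1 = a by ring]
    ring
  linarith

lemma Gw_cont (ha : 0 < a) : Continuous (Gw a B σ) :=
  ((continuous_const.mul (cont_rpow (by linarith : (0:ℝ) ≤ 2*a+2))).div_const _).add
    ((continuous_const.mul continuous_id).div_const a)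

lemma Gw0 (ha : 0 < a) : Gw a B σ 0 = 0 := by
  unfold Gw
  rw [Real.zero_rpow (by positivity : 2*a+2 ≠ 0)]
  ring

lemma Gw_mono (ha : 0 < a) (hB : 0 ≤ B) (hσ : 0 ≤ σ) {x y : ℝ} (hx : 0 ≤ x) (hxy : x ≤ y) :
    Gw a B σ x ≤ Gw a B σ y := by
  have h1 : x ^ (2*a+2) ≤ y ^ (2*a+2) := Real.rpow_le_rpow hx hxy (by linarith)
  have hden : (0:ℝ) < (3*a+1)*(2*a+2) := by positivity
  unfold Gw
  have h2 : B * x ^ (2*a+2) / ((3*a+1)*(2*a+2)) ≤ B * y ^ (2*a+2) / ((3*a+1)*(2*a+2)) :=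
    (div_le_div_iff_of_pos_right hden).mpr (mul_le_mul_of_nonneg_left h1 hB)
  have h3 : σ * x / a ≤ σ * y / a :=
    (div_le_div_iff_of_pos_right ha).mpr (mul_le_mul_of_nonneg_left hxy hσ)
  linarith

lemma Gw_nonneg (ha : 0 < a) (hB : 0 ≤ B) (hσ : 0 ≤ σ) {ζ : ℝ} (hζ : 0 ≤ ζ) :
    0 ≤ Gw a B σ ζ := by
  have := Gw_mono (B := B) (σ := σ) ha hB hσ le_rfl hζ
  rwa [Gw0 ha] at this

lemma hasDerivAt_Gw (ha : 0 < a) (s : ℝ) :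
    HasDerivAt (Gw a B σ) (B * s ^ (2*a+1) / (3*a+1) + σ / a) s := by
  have h0 := Real.hasDerivAt_rpow_const (x := s) (p := 2*a+2) (Or.inr (by linarith))
  rw [show 2*a+2-1 = 2*a+1 by ring] at h0
  have hlin : HasDerivAt (fun ζ : ℝ => σ * ζ / a) (σ / a) s := by
    simpa using ((hasDerivAt_id s).const_mul σ).div_const a
  have h2 := ((h0.const_mul B).div_const ((3*a+1)*(2*a+2))).add hlin
  refine h2.congr_deriv ?_
  field_simp

lemma ok_abs_le (ha : 0 < a) (hB : 0 ≤ B) (hσ : 0 ≤ σ) (hv : Continuous v) {s K : ℝ}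
    (hs : 0 ≤ s) (hK : ∀ t ∈ Icc 0 s, |v t| ≤ K) :
    |ok a B σ v s| ≤ K * (B * s ^ (2*a+1) / (3*a+1) + σ / a) := by
  have hK0 : 0 ≤ K := le_trans (abs_nonneg _) (hK 0 ⟨le_rfl, hs⟩)
  rcases hs.eq_or_lt with h0 | hpos
  · subst h0
    have : ok a B σ v 0 = 0 := by
      simp [ok, Fv]
    rw [this, abs_zero]
    positivity
  · have h1 : |ok a B σ v s| = s ^ (-a) * |Fv a B σ v s| := by
      rw [ok, abs_mul, abs_of_nonneg (Real.rpow_nonneg hs _)]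
    have h2 := Fv_abs_le ha hB hσ hv hs hK
    have h3 : s ^ (-a) * |Fv a B σ v s|
        ≤ s ^ (-a) * (K * (B * s ^ (3*a+1) / (3*a+1) + σ * s ^ a / a)) :=
      mul_le_mul_of_nonneg_left h2 (Real.rpow_nonneg hs _)
    have e1 : s ^ (-a) * s ^ (3*a+1) = s ^ (2*a+1) := by
      rw [rpow_mul_rpow hs (by linarith)]; congr 1; ring
    have e2 : s ^ (-a) * s ^ a = 1 := by
      rw [Real.rpow_neg hs]
      exact inv_mul_cancel₀ (Real.rpow_pos_of_pos hpos a).ne'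
    have e3 : s ^ (-a) * (K * (B * s ^ (3*a+1) / (3*a+1) + σ * s ^ a / a))
        = K * (B * (s ^ (-a) * s ^ (3*a+1)) / (3*a+1) + σ * (s ^ (-a) * s ^ a) / a) := by
      ring
    rw [h1]
    rw [e3, e1, e2] at h3
    simpa using h3

lemma Iv_abs_le (ha : 0 < a) (ha1 : a < 1) (hB : 0 ≤ B) (hσ : 0 ≤ σ) (hv : Continuous v)
    {ζ K : ℝ} (hζ : 0 ≤ ζ) (hK : ∀ t ∈ Icc 0 ζ, |v t| ≤ K) :
    |Iv a B σ v ζ| ≤ K * Gw a B σ ζ := by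
  have hK0 : 0 ≤ K := le_trans (abs_nonneg _) (hK 0 ⟨le_rfl, hζ⟩)
  have hint : IntervalIntegrable (fun s : ℝ => K * (B * s ^ (2*a+1) / (3*a+1) + σ / a))
      volume 0 ζ := by
    exact (continuous_const.mul (((continuous_const.mul
      (cont_rpow (by linarith : (0:ℝ) ≤ 2*a+1))).div_const _).add
      continuous_const)).intervalIntegrable _ _
  have h1 : |Iv a B σ v ζ| ≤ ∫ s in (0:ℝ)..ζ, |ok a B σ v s| :=
    intervalIntegral.abs_integral_le_integral_abs hζ
  have h2 : (∫ s in (0:ℝ)..ζ, |ok a B σ v s|)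
      ≤ ∫ s in (0:ℝ)..ζ, K * (B * s ^ (2*a+1) / (3*a+1) + σ / a) := by
    refine integral_mono_on hζ ((ok_int ha ha1 hv 0 ζ).abs) hint ?_
    intro s hsm
    exact ok_abs_le ha hB hσ hv hsm.1 (fun t ht => hK t ⟨ht.1, ht.2.trans hsm.2⟩)
  have h3 : (∫ s in (0:ℝ)..ζ, K * (B * s ^ (2*a+1) / (3*a+1) + σ / a))
      = K * Gw a B σ ζ := by
    rw [intervalIntegral.integral_const_mul]
    have : (∫ s in (0:ℝ)..ζ, (B * s ^ (2*a+1) / (3*a+1) + σ / a))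
        = (∫ s in (0:ℝ)..ζ, (B / (3*a+1)) * s ^ (2*a+1)) + ∫ s in (0:ℝ)..ζ, (σ / a) := by
      rw [← integral_add ((intervalIntegrable_rpow' (by linarith)).const_mul _)
        intervalIntegrable_const]
      apply integral_congr
      intro t _
      ring
    rw [this, intervalIntegral.integral_const_mul, integral_rpow0 (by linarith),
      intervalIntegral.integral_const]
    unfold Gw
    rw [show 2*a+1+1 = 2*a+2 by ring]
    simp only [smul_eq_mul, sub_zero]
    have hd1 : (3*a+1 : ℝ) ≠ 0 := by positivity
    have hd2 : (2*a+2 : ℝ) ≠ 0 := by positivity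
    have hd3 : (a : ℝ) ≠ 0 := ha.ne'
    field_simp
    try ring
    try exact Or.inl trivial
  linarith

lemma ok_abs_le_exp (ha : 0 < a) (hB : 0 ≤ B) (hσ : 0 ≤ σ) (hv : Continuous v) {s C : ℝ}
    (hs : 0 ≤ s) (hC : 0 ≤ C)
    (hb : ∀ t ∈ Icc 0 s, |v t| ≤ C * Real.exp (2 * Gw a B σ t)) :
    |ok a B σ v s| ≤ C * ((B * s ^ (2*a+1) / (3*a+1) + σ / a) * Real.exp (2 * Gw a B σ s)) := by
  have hb' : ∀ t ∈ Icc 0 s, |v t| ≤ C * Real.exp (2 * Gw a B σ s) := by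
    intro t ht
    refine (hb t ht).trans (mul_le_mul_of_nonneg_left ?_ hC)
    exact Real.exp_le_exp.mpr (by
      have := Gw_mono (B := B) (σ := σ) ha hB hσ ht.1 ht.2
      linarith)
  have h := ok_abs_le ha hB hσ hv hs hb'
  calc |ok a B σ v s| ≤ (C * Real.exp (2 * Gw a B σ s)) * (B * s ^ (2*a+1) / (3*a+1) + σ / a) := h
    _ = C * ((B * s ^ (2*a+1) / (3*a+1) + σ / a) * Real.exp (2 * Gw a B σ s)) := by ring

lemma Iv_abs_le_exp (ha : 0 < a) (ha1 : a < 1) (hB : 0 ≤ B) (hσ : 0 ≤ σ) (hv : Continuous v)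
    {ζ C : ℝ} (hζ : 0 ≤ ζ) (hC : 0 ≤ C)
    (hb : ∀ t ∈ Icc 0 ζ, |v t| ≤ C * Real.exp (2 * Gw a B σ t)) :
    |Iv a B σ v ζ| ≤ C * (Real.exp (2 * Gw a B σ ζ) - 1) / 2 := by
  have hcontI : Continuous (fun s : ℝ =>
      C * ((B * s ^ (2*a+1) / (3*a+1) + σ / a) * Real.exp (2 * Gw a B σ s))) := by
    apply continuous_const.mul
    exact (((continuous_const.mul (cont_rpow (by linarith : (0:ℝ) ≤ 2*a+1))).div_const _).add
      continuous_const).mul ((continuous_const.mul (Gw_cont ha)).rexp)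
  have hAD : ∀ s : ℝ, HasDerivAt (fun x => C * Real.exp (2 * Gw a B σ x) / 2)
      (C * ((B * s ^ (2*a+1) / (3*a+1) + σ / a) * Real.exp (2 * Gw a B σ s))) s := by
    intro s
    have h1 := (((hasDerivAt_Gw (B := B) (σ := σ) ha s).const_mul 2).exp.const_mul C).div_const 2
    refine h1.congr_deriv ?_
    ring
  have hfund : (∫ s in (0:ℝ)..ζ,
      C * ((B * s ^ (2*a+1) / (3*a+1) + σ / a) * Real.exp (2 * Gw a B σ s)))
      = C * (Real.exp (2 * Gw a B σ ζ) - 1) / 2 := by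
    rw [integral_eq_sub_of_hasDerivAt (fun s _ => hAD s) (hcontI.intervalIntegrable _ _)]
    rw [Gw0 ha]
    simp [Real.exp_zero]
    ring
  have h1 : |Iv a B σ v ζ| ≤ ∫ s in (0:ℝ)..ζ, |ok a B σ v s| :=
    intervalIntegral.abs_integral_le_integral_abs hζ
  have h2 : (∫ s in (0:ℝ)..ζ, |ok a B σ v s|)
      ≤ ∫ s in (0:ℝ)..ζ,
        C * ((B * s ^ (2*a+1) / (3*a+1) + σ / a) * Real.exp (2 * Gw a B σ s)) := by
    refine integral_mono_on hζ ((ok_int ha ha1 hv 0 ζ).abs) (hcontI.intervalIntegrable _ _) ?_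
    intro s hsm
    exact ok_abs_le_exp ha hB hσ hv hsm.1 hC (fun t ht => hb t ⟨ht.1, ht.2.trans hsm.2⟩)
  linarith

lemma Iv_sub (ha : 0 < a) (ha1 : a < 1) {w : ℝ → ℝ} (hv : Continuous v) (hw : Continuous w)
    (x : ℝ) :
    Iv a B σ v x - Iv a B σ w x = Iv a B σ (fun t => v t - w t) x := by
  have hFv : ∀ s, Fv a B σ v s - Fv a B σ w s = Fv a B σ (fun t => v t - w t) s := by
    intro s
    rw [Fv, Fv, Fv, ← integral_sub (kk_int ha hv 0 s) (kk_int ha hw 0 s)]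
    apply integral_congr
    intro t _
    simp only [kk]
    ring
  rw [Iv, Iv, Iv, ← integral_sub (ok_int ha ha1 hv 0 x) (ok_int ha ha1 hw 0 x)]
  apply integral_congr
  intro s _
  simp only [ok]
  rw [← hFv]
  ring

noncomputable def Ew (a B σ : ℝ) : ℝ → ℝ := fun ζ => Real.exp (2 * Gw a B σ (max ζ 0))

lemma Ew_cont (ha : 0 < a) : Continuous (Ew a B σ) :=
  (continuous_const.mul ((Gw_cont ha).comp (continuous_id.max continuous_const))).rexp

lemma Ew_eq {ζ : ℝ} (hζ : 0 ≤ ζ) : Ew a B σ ζ = Real.exp (2 * Gw a B σ ζ) := by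
  rw [Ew, max_eq_left hζ]

lemma Ew_one_le (ha : 0 < a) (hB : 0 ≤ B) (hσ : 0 ≤ σ) (ζ : ℝ) : 1 ≤ Ew a B σ ζ := by
  rw [Ew, ← Real.exp_zero]
  exact Real.exp_le_exp.mpr
    (by have := Gw_nonneg (B := B) (σ := σ) ha hB hσ (le_max_right ζ 0); linarith)

lemma exists_sol (ha : 0 < a) (ha1 : a < 1) (hB : 0 ≤ B) (hσ : 0 ≤ σ) :
    ∃ v : ℝ → ℝ, Continuous v ∧ ∀ ζ, 0 ≤ ζ → v ζ = 1 + Iv a B σ v ζ := by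
  have hEc : Continuous (Ew a B σ) := Ew_cont ha
  have hE1 : ∀ ζ, 1 ≤ Ew a B σ ζ := Ew_one_le ha hB hσ
  have hEpos : ∀ ζ, (0:ℝ) < Ew a B σ ζ := fun ζ => Real.exp_pos _
  have key : ∀ (w : ℝ → ℝ), Continuous w → ∀ C : ℝ, 0 ≤ C → (∀ t, |w t| ≤ C) →
      ∀ ζ : ℝ, |Iv a B σ (fun t => Ew a B σ t * w t) (max ζ 0)|
        ≤ C * (Ew a B σ ζ - 1) / 2 := by
    intro w hw C hC hwC ζ
    have hx0 : (0:ℝ) ≤ max ζ 0 := le_max_right _ _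
    have hb : ∀ t ∈ Icc (0:ℝ) (max ζ 0),
        |Ew a B σ t * w t| ≤ C * Real.exp (2 * Gw a B σ t) := by
      intro t ht
      rw [abs_mul, abs_of_pos (hEpos t), Ew_eq ht.1]
      calc Real.exp (2 * Gw a B σ t) * |w t|
          ≤ Real.exp (2 * Gw a B σ t) * C :=
            mul_le_mul_of_nonneg_left (hwC t) (Real.exp_pos _).le
        _ = C * Real.exp (2 * Gw a B σ t) := by ring
    have h := Iv_abs_le_exp ha ha1 hB hσ (hEc.mul hw) hx0 hC hb
    have hEeq : Ew a B σ ζ = Real.exp (2 * Gw a B σ (max ζ 0)) := rfl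
    rw [hEeq]
    exact h
  let Phi : BoundedContinuousFunction ℝ ℝ → BoundedContinuousFunction ℝ ℝ := fun u =>
    BoundedContinuousFunction.ofNormedAddCommGroup
      (fun ζ => (1 + Iv a B σ (fun t => Ew a B σ t * u t) (max ζ 0)) / Ew a B σ ζ)
      (by
        apply Continuous.div _ hEc (fun ζ => (hEpos ζ).ne')
        exact continuous_const.add ((Iv_cont ha ha1 (hEc.mul u.continuous)).comp
          (continuous_id.max continuous_const)))
      (1 + ‖u‖)
      (by
        intro ζ
        rw [Real.norm_eq_abs, abs_div, abs_of_pos (hEpos ζ)]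
        have hIb := key u u.continuous ‖u‖ (norm_nonneg u)
          (fun t => by rw [← Real.norm_eq_abs]; exact u.norm_coe_le_norm t) ζ
        have h1 : |1 + Iv a B σ (fun t => Ew a B σ t * u t) (max ζ 0)|
            ≤ 1 + ‖u‖ * (Ew a B σ ζ - 1) / 2 := by
          refine (abs_add_le _ _).trans ?_
          rw [abs_one]
          linarith
        rw [div_le_iff₀ (hEpos ζ)]
        have hE := hE1 ζ
        nlinarith [norm_nonneg u])
  have hPhi_coe : ∀ (u : BoundedContinuousFunction ℝ ℝ) (ζ : ℝ),
      Phi u ζ = (1 + Iv a B σ (fun t => Ew a B σ t * u t) (max ζ 0)) / Ew a B σ ζ := by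
    intro u ζ
    rfl
  have hcontr : ContractingWith (1/2 : ℝ≥0) Phi := by
    constructor
    · rw [← NNReal.coe_lt_coe]
      norm_num
    · apply LipschitzWith.of_dist_le_mul
      intro u1 u2
      apply (BoundedContinuousFunction.dist_le (by positivity)).mpr
      intro ζ
      rw [Real.dist_eq, hPhi_coe, hPhi_coe, div_sub_div_same]
      have hsub : (1 + Iv a B σ (fun t => Ew a B σ t * u1 t) (max ζ 0))
          - (1 + Iv a B σ (fun t => Ew a B σ t * u2 t) (max ζ 0))
          = Iv a B σ (fun t => Ew a B σ t * (u1 t - u2 t)) (max ζ 0) := by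
        have h2 := Iv_sub (B := B) (σ := σ) ha ha1
          (hEc.mul u1.continuous) (hEc.mul u2.continuous) (max ζ 0)
        have h3 : Iv a B σ (fun t => Ew a B σ t * u1 t - Ew a B σ t * u2 t) (max ζ 0)
            = Iv a B σ (fun t => Ew a B σ t * (u1 t - u2 t)) (max ζ 0) := by
          congr 1
          funext t
          ring
        change Iv a B σ (fun t => Ew a B σ t * u1 t) _ - Iv a B σ (fun t => Ew a B σ t * u2 t) _ = Iv a B σ (fun t => Ew a B σ t * u1 t - Ew a B σ t * u2 t) _ at h2
        rw [← h3, ← h2]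
        ring
      rw [hsub, abs_div, abs_of_pos (hEpos ζ)]
      have hkey := key (fun t => u1 t - u2 t) (u1.continuous.sub u2.continuous)
        (dist u1 u2) dist_nonneg
        (fun t => by
          rw [← Real.dist_eq]
          exact BoundedContinuousFunction.dist_coe_le_dist t) ζ
      rw [div_le_iff₀ (hEpos ζ)]
      have hE := hE1 ζ
      have : ((1/2 : ℝ≥0) : ℝ) = 1/2 := by norm_num
      rw [this]
      nlinarith [dist_nonneg (x := u1) (y := u2)]
  obtain ⟨u, hu⟩ : ∃ u : BoundedContinuousFunction ℝ ℝ, Phi u = u :=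
    ⟨hcontr.fixedPoint, hcontr.fixedPoint_isFixedPt⟩
  refine ⟨fun ζ => Ew a B σ ζ * u ζ, hEc.mul u.continuous, ?_⟩
  intro ζ hζ
  have h2 : (1 + Iv a B σ (fun t => Ew a B σ t * u t) (max ζ 0)) / Ew a B σ ζ = u ζ := by
    rw [← hPhi_coe u ζ, hu]
  rw [max_eq_left hζ] at h2
  show Ew a B σ ζ * u ζ = 1 + Iv a B σ (fun t => Ew a B σ t * u t) ζ
  rw [← h2, mul_comm]
  exact div_mul_cancel₀ _ (hEpos ζ).ne'

lemma sol_at0 (hveq : ∀ ζ, 0 ≤ ζ → v ζ = 1 + Iv a B σ v ζ) : v 0 = 1 := by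
  have := hveq 0 le_rfl
  simpa [Iv] using this

lemma kk_contAt (ha : 0 < a) (hv : Continuous v) {x : ℝ} (hx : 0 < x) :
    ContinuousAt (kk a B σ v) x :=
  (contAt_rpow hx.ne').mul (gv_cont ha hv).continuousAt

lemma kk_contOn (ha : 0 < a) (hv : Continuous v) : ContinuousOn (kk a B σ v) (Ioi 0) :=
  fun x hx => (kk_contAt ha hv hx).continuousWithinAt

lemma ok_contAt (ha : 0 < a) (hv : Continuous v) {x : ℝ} (hx : 0 < x) :
    ContinuousAt (ok a B σ v) x :=
  (contAt_rpow hx.ne').mul (Fv_cont ha hv).continuousAt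

lemma ok_contOn (ha : 0 < a) (hv : Continuous v) : ContinuousOn (ok a B σ v) (Ioi 0) :=
  fun x hx => (ok_contAt ha hv hx).continuousWithinAt

lemma hasDerivAt_Fv (ha : 0 < a) (hv : Continuous v) {ζ : ℝ} (hζ : 0 < ζ) :
    HasDerivAt (Fv a B σ v) (kk a B σ v ζ) ζ :=
  integral_hasDerivAt_right (kk_int ha hv 0 ζ)
    ⟨Ioi 0, Ioi_mem_nhds hζ, (kk_contOn ha hv).aestronglyMeasurable measurableSet_Ioi⟩
    (kk_contAt ha hv hζ)

lemma hasDerivAt_v (ha : 0 < a) (ha1 : a < 1) (hv : Continuous v)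
    (hveq : ∀ ζ, 0 ≤ ζ → v ζ = 1 + Iv a B σ v ζ) {ζ : ℝ} (hζ : 0 < ζ) :
    HasDerivAt v (ok a B σ v ζ) ζ := by
  have h1 : HasDerivAt (fun x => 1 + Iv a B σ v x) (ok a B σ v ζ) ζ := by
    have h0 : HasDerivAt (fun u => ∫ s in (0:ℝ)..u, ok a B σ v s) (ok a B σ v ζ) ζ :=
      integral_hasDerivAt_right (ok_int ha ha1 hv 0 ζ)
        ⟨Ioi 0, Ioi_mem_nhds hζ, (ok_contOn (B := B) (σ := σ) ha hv).aestronglyMeasurable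
          measurableSet_Ioi⟩
        (ok_contAt ha hv hζ)
    exact h0.const_add 1
  apply h1.congr_of_eventuallyEq
  filter_upwards [Ioi_mem_nhds hζ] with x hx
  exact hveq x (le_of_lt hx)

lemma deriv_v (ha : 0 < a) (ha1 : a < 1) (hv : Continuous v)
    (hveq : ∀ ζ, 0 ≤ ζ → v ζ = 1 + Iv a B σ v ζ) {ζ : ℝ} (hζ : 0 < ζ) :
    deriv v ζ = ok a B σ v ζ :=
  (hasDerivAt_v ha ha1 hv hveq hζ).deriv

noncomputable def okd (a B σ : ℝ) (v : ℝ → ℝ) : ℝ → ℝ :=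
  fun ζ => -a * ζ ^ (-a-1) * Fv a B σ v ζ + ζ ^ (-a) * kk a B σ v ζ

lemma hasDerivAt_ok (ha : 0 < a) (hv : Continuous v) {ζ : ℝ} (hζ : 0 < ζ) :
    HasDerivAt (ok a B σ v) (okd a B σ v ζ) ζ := by
  have h1 : HasDerivAt (fun x : ℝ => x ^ (-a)) (-a * ζ ^ (-a-1)) ζ := by
    have h := Real.hasDerivAt_rpow_const (x := ζ) (p := -a) (Or.inl hζ.ne')
    rwa [show -a - 1 = -a-1 by ring] at h
  exact h1.mul (hasDerivAt_Fv ha hv hζ)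

lemma okd_contOn (ha : 0 < a) (hv : Continuous v) : ContinuousOn (okd a B σ v) (Ioi 0) := by
  intro x hx
  exact (((continuousAt_const.mul (contAt_rpow hx.ne')).mul
    (Fv_cont ha hv).continuousAt).add
    ((contAt_rpow hx.ne').mul (kk_contAt ha hv hx))).continuousWithinAt

lemma deriv2_v (ha : 0 < a) (ha1 : a < 1) (hv : Continuous v)
    (hveq : ∀ ζ, 0 ≤ ζ → v ζ = 1 + Iv a B σ v ζ) {ζ : ℝ} (hζ : 0 < ζ) :
    deriv (deriv v) ζ = okd a B σ v ζ := by
  have he : deriv v =ᶠ[nhds ζ] ok a B σ v := by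
    filter_upwards [Ioi_mem_nhds hζ] with x hx
    exact deriv_v ha ha1 hv hveq hx
  rw [Filter.EventuallyEq.deriv_eq he]
  exact (hasDerivAt_ok ha hv hζ).deriv

lemma sol_ode (ha : 0 < a) (ha1 : a < 1) (hv : Continuous v)
    (hveq : ∀ ζ, 0 ≤ ζ → v ζ = 1 + Iv a B σ v ζ) {ζ : ℝ} (hζ : 0 < ζ) :
    -ζ * deriv (deriv v) ζ - deriv v ζ * a + B * ζ ^ (1+2*a) * v ζ = σ * v ζ := by
  rw [deriv2_v ha ha1 hv hveq hζ, deriv_v ha ha1 hv hveq hζ]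
  simp only [okd, ok, kk]
  have e1 : ζ * ζ ^ (-a-1) = ζ ^ (-a) := by
    have h := Real.rpow_add hζ (-a-1) 1
    rw [Real.rpow_one, show -a-1+1 = -a by ring] at h
    rw [mul_comm]
    exact h.symm
  have e2 : ζ ^ (-a) * ζ ^ (a-1) = ζ⁻¹ := by
    rw [← Real.rpow_add hζ, show -a + (a-1) = -1 by ring, Real.rpow_neg_one]
  have e4 : ζ * (ζ ^ (-a) * ζ ^ (a-1)) = 1 := by
    rw [e2]
    exact mul_inv_cancel₀ hζ.ne'
  linear_combination (a * Fv a B σ v ζ) * e1 - ((B * ζ ^ (1+2*a) - σ) * v ζ) * e4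

lemma tendsto_ok0 (ha : 0 < a) (hB : 0 ≤ B) (hσ : 0 ≤ σ) (hv : Continuous v)
    (hv0 : v 0 = 1) :
    Tendsto (ok a B σ v) (nhdsWithin 0 (Ioi 0)) (nhds (-(σ/a))) := by
  rw [Metric.tendsto_nhdsWithin_nhds]
  intro ε hε
  obtain ⟨d1, hd1, hb1⟩ := Metric.continuousAt_iff.mp hv.continuousAt 1 one_pos
  set ε1 : ℝ := min 1 (a * ε / (4 * (σ + 1))) with hε1def
  have hε1pos : 0 < ε1 := lt_min one_pos (by positivity)
  obtain ⟨d2, hd2, hb2⟩ := Metric.continuousAt_iff.mp hv.continuousAt ε1 hε1pos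
  refine ⟨min (min d1 d2) (min 1 (ε * (3*a+1) / (8*B+1))), by positivity, ?_⟩
  intro x hx hdist
  have hxpos : 0 < x := hx
  rw [Real.dist_eq, sub_zero, abs_of_pos hxpos] at hdist
  have hx1 : x ≤ 1 := le_of_lt (lt_of_lt_of_le hdist ((min_le_right _ _).trans (min_le_left _ _)))
  have hxd1 : x < d1 := lt_of_lt_of_le hdist ((min_le_left _ _).trans (min_le_left _ _))
  have hxd2 : x < d2 := lt_of_lt_of_le hdist ((min_le_left _ _).trans (min_le_right _ _))
  have hxE : x ≤ ε * (3*a+1) / (8*B+1) :=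
    le_of_lt (lt_of_lt_of_le hdist ((min_le_right _ _).trans (min_le_right _ _)))
  have hvb : ∀ t ∈ Icc (0:ℝ) x, |v t| ≤ 2 := by
    intro t ht
    have : dist t 0 < d1 := by
      rw [Real.dist_eq, sub_zero, abs_of_nonneg ht.1]
      exact lt_of_le_of_lt ht.2 hxd1
    have h2 := hb1 this
    rw [Real.dist_eq, hv0] at h2
    have := abs_sub_abs_le_abs_sub (v t) 1
    rw [abs_one] at this
    linarith
  have hvb2 : ∀ t ∈ Icc (0:ℝ) x, |v t - 1| ≤ ε1 := by
    intro t ht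
    have : dist t 0 < d2 := by
      rw [Real.dist_eq, sub_zero, abs_of_nonneg ht.1]
      exact lt_of_le_of_lt ht.2 hxd2
    have h2 := hb2 this
    rw [Real.dist_eq, hv0] at h2
    linarith
  -- the combined integrand
  have hstep1 : Fv a B σ v x + σ * (x ^ a / a)
      = ∫ t in (0:ℝ)..x, (kk a B σ v t + σ * t ^ (a-1)) := by
    rw [integral_add (kk_int ha hv 0 x) ((intervalIntegrable_rpow' (by linarith)).const_mul σ),
      intervalIntegral.integral_const_mul, integral_rpow0 (by linarith),
      show a - 1 + 1 = a by ring, Fv]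
  have hint2 : IntervalIntegrable (fun t : ℝ => 2*B*t^(3*a) + σ*ε1*t^(a-1)) volume 0 x :=
    ((intervalIntegrable_rpow' (by linarith)).const_mul _).add
      ((intervalIntegrable_rpow' (by linarith)).const_mul _)
  have hstep2 : |∫ t in (0:ℝ)..x, (kk a B σ v t + σ * t ^ (a-1))|
      ≤ ∫ t in (0:ℝ)..x, (2*B*t^(3*a) + σ*ε1*t^(a-1)) := by
    refine (intervalIntegral.abs_integral_le_integral_abs hxpos.le).trans ?_
    refine integral_mono_on hxpos.le
      ((kk_int ha hv 0 x).add ((intervalIntegrable_rpow' (by linarith)).const_mul σ)).abs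
      hint2 ?_
    intro t ht
    have hX : (0:ℝ) ≤ t ^ (a-1) := Real.rpow_nonneg ht.1 _
    have hP : (0:ℝ) ≤ t ^ (1+2*a) := Real.rpow_nonneg ht.1 _
    have hXP : t ^ (a-1) * t ^ (1+2*a) = t ^ (3*a) := by
      rw [rpow_mul_rpow ht.1 (by linarith)]
      congr 1
      ring
    have hcomb : kk a B σ v t + σ * t ^ (a-1)
        = t ^ (a-1) * (B * t ^ (1+2*a) * v t + σ * (1 - v t)) := by
      simp only [kk]
      ring
    rw [hcomb, abs_mul, abs_of_nonneg hX]
    have habs : |B * t ^ (1+2*a) * v t + σ * (1 - v t)|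
        ≤ B * t ^ (1+2*a) * 2 + σ * ε1 := by
      refine (abs_add_le _ _).trans ?_
      have h1 : |B * t ^ (1+2*a) * v t| ≤ B * t ^ (1+2*a) * 2 := by
        rw [abs_mul, abs_of_nonneg (by positivity)]
        exact mul_le_mul_of_nonneg_left (hvb t ht) (by positivity)
      have h2 : |σ * (1 - v t)| ≤ σ * ε1 := by
        rw [abs_mul, abs_of_nonneg hσ, abs_sub_comm]
        exact mul_le_mul_of_nonneg_left (hvb2 t ht) hσ
      linarith
    calc t ^ (a-1) * |B * t ^ (1+2*a) * v t + σ * (1 - v t)|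
        ≤ t ^ (a-1) * (B * t ^ (1+2*a) * 2 + σ * ε1) :=
          mul_le_mul_of_nonneg_left habs hX
      _ = 2*B*(t ^ (a-1) * t ^ (1+2*a)) + σ*ε1*t^(a-1) := by ring
      _ = 2*B*t^(3*a) + σ*ε1*t^(a-1) := by rw [hXP]
  have hstep3 : (∫ t in (0:ℝ)..x, (2*B*t^(3*a) + σ*ε1*t^(a-1)))
      = 2*B*(x^(3*a+1)/(3*a+1)) + σ*ε1*(x^a/a) := by
    rw [integral_add ((intervalIntegrable_rpow' (by linarith)).const_mul _)
      ((intervalIntegrable_rpow' (by linarith)).const_mul _),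
      intervalIntegral.integral_const_mul, intervalIntegral.integral_const_mul,
      integral_rpow0 (by linarith), integral_rpow0 (by linarith),
      show a - 1 + 1 = a by ring]
  have hxa : (0:ℝ) < x ^ a := Real.rpow_pos_of_pos hxpos a
  have hstep4 : |ok a B σ v x + σ/a| = x ^ (-a) * |Fv a B σ v x + σ * (x ^ a / a)| := by
    have hkeyeq : ok a B σ v x + σ/a = x ^ (-a) * (Fv a B σ v x + σ * (x ^ a / a)) := by
      rw [mul_add, ok]
      congr 1
      rw [Real.rpow_neg hxpos.le]
      field_simp
    rw [hkeyeq, abs_mul, abs_of_nonneg (Real.rpow_nonneg hxpos.le _)]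
  have hxna : (0:ℝ) ≤ x ^ (-a) := Real.rpow_nonneg hxpos.le _
  have hstep5 : x ^ (-a) * (2*B*(x^(3*a+1)/(3*a+1)) + σ*ε1*(x^a/a))
      = 2*B*(x^(2*a+1)/(3*a+1)) + σ*ε1/a := by
    have e1 : x ^ (-a) * x ^ (3*a+1) = x ^ (2*a+1) := by
      rw [rpow_mul_rpow hxpos.le (by linarith)]
      congr 1
      ring
    have e2 : x ^ (-a) * x ^ a = 1 := by
      rw [Real.rpow_neg hxpos.le]
      exact inv_mul_cancel₀ hxa.ne'
    calc x ^ (-a) * (2*B*(x^(3*a+1)/(3*a+1)) + σ*ε1*(x^a/a))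
        = 2*B*((x ^ (-a) * x^(3*a+1))/(3*a+1)) + σ*ε1*(x ^ (-a) * x^a)/a := by ring
      _ = 2*B*(x^(2*a+1)/(3*a+1)) + σ*ε1/a := by rw [e1, e2]; ring
  have hx2a : x ^ (2*a+1) ≤ x := by
    have := Real.rpow_le_rpow_of_exponent_ge hxpos hx1 (by linarith : (1:ℝ) ≤ 2*a+1)
    rwa [Real.rpow_one] at this
  have h3 : (0:ℝ) < 3*a+1 := by linarith
  have h8 : (0:ℝ) < 8*B+1 := by linarith
  have hynn : (0:ℝ) ≤ x ^ (2*a+1) := Real.rpow_nonneg hxpos.le _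
  have hfin1 : 2*B*(x^(2*a+1)/(3*a+1)) ≤ ε/2 := by
    have hy : x ^ (2*a+1) * (8*B+1) ≤ ε * (3*a+1) := by
      have h0 : x ^ (2*a+1) ≤ ε * (3*a+1)/(8*B+1) := hx2a.trans hxE
      rwa [le_div_iff₀ h8] at h0
    rw [← mul_div_assoc, div_le_iff₀ h3]
    nlinarith [mul_nonneg hB hynn, hε.le]
  have hfin2 : σ*ε1/a ≤ ε/4 := by
    have hε1le : ε1 * (4*(σ+1)) ≤ a*ε := by
      have h0 : ε1 ≤ a*ε/(4*(σ+1)) := by rw [hε1def]; exact min_le_right _ _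
      rwa [le_div_iff₀ (by positivity)] at h0
    rw [div_le_iff₀ ha]
    nlinarith [mul_nonneg hσ hε1pos.le, hε1pos.le]
  rw [Real.dist_eq, sub_neg_eq_add]
  calc |ok a B σ v x + σ/a|
      = x ^ (-a) * |Fv a B σ v x + σ * (x ^ a / a)| := hstep4
    _ = x ^ (-a) * |∫ t in (0:ℝ)..x, (kk a B σ v t + σ * t ^ (a-1))| := by rw [hstep1]
    _ ≤ x ^ (-a) * (∫ t in (0:ℝ)..x, (2*B*t^(3*a) + σ*ε1*t^(a-1))) :=
        mul_le_mul_of_nonneg_left hstep2 hxna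
    _ = x ^ (-a) * (2*B*(x^(3*a+1)/(3*a+1)) + σ*ε1*(x^a/a)) := by rw [hstep3]
    _ = 2*B*(x^(2*a+1)/(3*a+1)) + σ*ε1/a := hstep5
    _ ≤ ε/2 + ε/4 := add_le_add hfin1 hfin2
    _ < ε := by linarith

lemma hasDerivWithinAt_v0 (ha : 0 < a) (ha1 : a < 1) (hB : 0 ≤ B) (hσ : 0 ≤ σ)
    (hv : Continuous v) (hveq : ∀ ζ, 0 ≤ ζ → v ζ = 1 + Iv a B σ v ζ) :
    HasDerivWithinAt v (-(σ/a)) (Ici 0) 0 := by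
  have hmeas : StronglyMeasurableAtFilter (ok a B σ v) (nhdsWithin 0 (Ioi (0:ℝ))) volume :=
    ⟨Ioi 0, self_mem_nhdsWithin,
      (ok_contOn (B := B) (σ := σ) ha hv).aestronglyMeasurable measurableSet_Ioi⟩
  have htend : Tendsto (ok a B σ v) (nhdsWithin 0 (Ioi (0:ℝ)) ⊓ ae volume) (nhds (-(σ/a))) :=
    (tendsto_ok0 ha hB hσ hv (sol_at0 hveq)).mono_left inf_le_left
  have h0 : HasDerivWithinAt (fun u => ∫ s in (0:ℝ)..u, ok a B σ v s) (-(σ/a)) (Ici 0) 0 :=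
    integral_hasDerivWithinAt_of_tendsto_ae_right (ok_int ha ha1 hv 0 0) hmeas htend
  have h1 := h0.const_add 1
  exact h1.congr (fun x hx => hveq x hx) (hveq 0 le_rfl)

noncomputable def DW (a B σ : ℝ) (v : ℝ → ℝ) : ℝ → ℝ :=
  fun ζ => if ζ ≤ 0 then -(σ/a) else ok a B σ v ζ

lemma derivWithin_v (ha : 0 < a) (ha1 : a < 1) (hB : 0 ≤ B) (hσ : 0 ≤ σ)
    (hv : Continuous v) (hveq : ∀ ζ, 0 ≤ ζ → v ζ = 1 + Iv a B σ v ζ) :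
    EqOn (derivWithin v (Ici 0)) (DW a B σ v) (Ici 0) := by
  intro x hx
  rcases eq_or_lt_of_le (mem_Ici.mp hx) with h0 | hpos
  · rw [← h0]
    rw [(hasDerivWithinAt_v0 ha ha1 hB hσ hv hveq).derivWithin
      ((uniqueDiffOn_Ici 0) 0 self_mem_Ici)]
    simp [DW]
  · rw [derivWithin_of_mem_nhds (Ici_mem_nhds hpos), (hasDerivAt_v ha ha1 hv hveq hpos).deriv]
    simp [DW, not_le.mpr hpos]

lemma DW_contOn (ha : 0 < a) (hB : 0 ≤ B) (hσ : 0 ≤ σ) (hv : Continuous v)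
    (hv0 : v 0 = 1) : ContinuousOn (DW a B σ v) (Ici 0) := by
  intro x hx
  rcases eq_or_lt_of_le (mem_Ici.mp hx) with h0 | hpos
  · rw [← h0]
    have hval : DW a B σ v 0 = -(σ/a) := by simp [DW]
    rw [ContinuousWithinAt, hval]
    have hIci : Ici (0:ℝ) = {0} ∪ Ioi 0 := by
      ext t
      simp only [mem_Ici, mem_union, mem_singleton_iff, mem_Ioi]
      constructor
      · intro h
        rcases eq_or_lt_of_le h with h' | h'
        · exact Or.inl h'.symm
        · exact Or.inr h'
      · rintro (h | h)
        · exact h.ge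
        · exact h.le
    rw [hIci, nhdsWithin_union, tendsto_sup]
    constructor
    · rw [nhdsWithin_singleton]
      have : DW a B σ v 0 = -(σ/a) := hval
      exact this ▸ tendsto_pure_nhds (DW a B σ v) 0
    · apply Filter.Tendsto.congr' _ (tendsto_ok0 ha hB hσ hv hv0)
      filter_upwards [self_mem_nhdsWithin] with t ht
      simp [DW, not_le.mpr (mem_Ioi.mp ht)]
  · have hok : ContinuousAt (ok a B σ v) x := ok_contAt ha hv hpos
    have hev : ok a B σ v =ᶠ[nhds x] DW a B σ v := by
      filter_upwards [Ioi_mem_nhds hpos] with t ht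
      simp [DW, not_le.mpr (mem_Ioi.mp ht)]
    have hAt : ContinuousAt (DW a B σ v) x := by
      have hval : DW a B σ v x = ok a B σ v x := by simp [DW, not_le.mpr hpos]
      rw [ContinuousAt, hval]
      exact Filter.Tendsto.congr' hev hok
    exact hAt.continuousWithinAt

lemma contDiffOn_v_Ici (ha : 0 < a) (ha1 : a < 1) (hB : 0 ≤ B) (hσ : 0 ≤ σ)
    (hv : Continuous v) (hveq : ∀ ζ, 0 ≤ ζ → v ζ = 1 + Iv a B σ v ζ) :
    ContDiffOn ℝ 1 v (Ici 0) := by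
  have h : ContDiffOn ℝ (0 + 1 : WithTop ℕ∞) v (Ici 0) := by
    rw [contDiffOn_succ_iff_derivWithin (uniqueDiffOn_Ici (0:ℝ))]
    refine ⟨?_, by simp, ?_⟩
    · intro x hx
      rcases eq_or_lt_of_le (mem_Ici.mp hx) with h0 | hpos
      · rw [← h0]
        exact (hasDerivWithinAt_v0 ha ha1 hB hσ hv hveq).differentiableWithinAt
      · exact (hasDerivAt_v ha ha1 hv hveq hpos).differentiableAt.differentiableWithinAt
    · rw [contDiffOn_zero]
      exact (DW_contOn ha hB hσ hv (sol_at0 hveq)).congr (derivWithin_v ha ha1 hB hσ hv hveq)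
  simpa using h

lemma contDiffOn_v_Ioi (ha : 0 < a) (ha1 : a < 1) (hv : Continuous v)
    (hveq : ∀ ζ, 0 ≤ ζ → v ζ = 1 + Iv a B σ v ζ) :
    ContDiffOn ℝ 2 v (Ioi 0) := by
  rw [show (2 : WithTop ℕ∞) = 1 + 1 by norm_num,
    contDiffOn_succ_iff_deriv_of_isOpen isOpen_Ioi]
  refine ⟨?_, by simp, ?_⟩
  · intro x hx
    exact (hasDerivAt_v ha ha1 hv hveq (mem_Ioi.mp hx)).differentiableAt.differentiableWithinAt
  · rw [show (1 : WithTop ℕ∞) = 0 + 1 by norm_num,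
      contDiffOn_succ_iff_deriv_of_isOpen isOpen_Ioi]
    refine ⟨?_, by simp, ?_⟩
    · apply DifferentiableOn.congr
        (fun x hx => (hasDerivAt_ok (B := B) (σ := σ) ha hv
          (mem_Ioi.mp hx)).differentiableAt.differentiableWithinAt)
      intro x hx
      exact deriv_v ha ha1 hv hveq (mem_Ioi.mp hx)
    · rw [contDiffOn_zero]
      exact (okd_contOn ha hv).congr
        (fun x hx => deriv2_v ha ha1 hv hveq (mem_Ioi.mp hx))

section Quant

variable {z : ℝ}

lemma v_bounds (ha : 0 < a) (ha1 : a < 1) (hB : 0 < B) (hσ : 0 ≤ σ) (hv : Continuous v)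
    (hveq : ∀ ζ, 0 ≤ ζ → v ζ = 1 + Iv a B σ v ζ) (hz : 0 < z)
    (hGz : Gw a B σ z ≤ 1/4) :
    ∀ ζ ∈ Icc 0 z, |v ζ - 1| ≤ 1/3 := by
  obtain ⟨t₀, ht₀, hmax'⟩ := isCompact_Icc.exists_isMaxOn (⟨0, le_rfl, hz.le⟩ :
    (Icc (0:ℝ) z).Nonempty) ((continuous_abs.comp hv).continuousOn)
  have hmax : ∀ t ∈ Icc (0:ℝ) z, |v t| ≤ |v t₀| := fun t ht => hmax' ht
  set K := |v t₀| with hKdef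
  have hKb : ∀ ζ ∈ Icc (0:ℝ) z, |v ζ - 1| ≤ K * Gw a B σ ζ := by
    intro ζ hζ
    have h2 : v ζ - 1 = Iv a B σ v ζ := by rw [hveq ζ hζ.1]; ring
    rw [h2]
    exact Iv_abs_le ha ha1 hB.le hσ hv hζ.1 (fun t ht => hmax t ⟨ht.1, ht.2.trans hζ.2⟩)
  have hGb : ∀ ζ ∈ Icc (0:ℝ) z, Gw a B σ ζ ≤ 1/4 :=
    fun ζ hζ => (Gw_mono ha hB.le hσ hζ.1 hζ.2).trans hGz
  have hKnn : 0 ≤ K := abs_nonneg _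
  have hK1 : K ≤ 4/3 := by
    have h := hKb t₀ ht₀
    have hG := hGb t₀ ht₀
    have h2 : K - 1 ≤ |v t₀ - 1| := by
      have := abs_sub_abs_le_abs_sub (v t₀) 1
      rw [abs_one] at this
      linarith
    have hGnn := Gw_nonneg (B := B) (σ := σ) ha hB.le hσ ht₀.1
    nlinarith
  intro ζ hζ
  have h := hKb ζ hζ
  have hG := hGb ζ hζ
  have hGnn := Gw_nonneg (B := B) (σ := σ) ha hB.le hσ hζ.1
  nlinarith

lemma Fz_lb (ha : 0 < a) (ha1 : a < 1) (hB : 0 < B) (hσ : 0 ≤ σ) (hv : Continuous v)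
    (hveq : ∀ ζ, 0 ≤ ζ → v ζ = 1 + Iv a B σ v ζ) (hz : 0 < z)
    (hGz : Gw a B σ z ≤ 1/4)
    (hσz2 : 4 * (σ * z ^ a / a) ≤ B * z ^ (3*a+1) / (3*a+1)) :
    B * z ^ (3*a+1) / (3*a+1) / 3 ≤ Fv a B σ v z := by
  have hvb := v_bounds ha ha1 hB hσ hv hveq hz hGz
  have hintlow : IntervalIntegrable
      (fun t : ℝ => (2/3)*B*t^(3*a) - (4/3)*σ*t^(a-1)) volume 0 z :=
    ((intervalIntegrable_rpow' (by linarith)).const_mul _).sub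
      ((intervalIntegrable_rpow' (by linarith)).const_mul _)
  have hlow : (∫ t in (0:ℝ)..z, ((2/3)*B*t^(3*a) - (4/3)*σ*t^(a-1)))
      ≤ Fv a B σ v z := by
    refine integral_mono_on hz.le hintlow (kk_int ha hv 0 z) ?_
    intro t ht
    have hX : (0:ℝ) ≤ t ^ (a-1) := Real.rpow_nonneg ht.1 _
    have hP : (0:ℝ) ≤ t ^ (1+2*a) := Real.rpow_nonneg ht.1 _
    have hXP : t ^ (a-1) * t ^ (1+2*a) = t ^ (3*a) := by
      rw [rpow_mul_rpow ht.1 (by linarith)]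
      congr 1
      ring
    have hVl : 2/3 ≤ v t := by
      have := abs_le.mp (hvb t ht)
      linarith [this.1]
    have hVu : v t ≤ 4/3 := by
      have := abs_le.mp (hvb t ht)
      linarith [this.2]
    have key : (2/3)*B*(t^(a-1) * t^(1+2*a)) - (4/3)*σ*t^(a-1)
        ≤ t^(a-1)*((B*t^(1+2*a) - σ) * v t) := by
      nlinarith [mul_nonneg (mul_nonneg hB.le hX) hP, mul_nonneg hσ hX,
        mul_nonneg hX hP]
    rw [hXP] at key
    simpa [kk] using key
  have hval : (∫ t in (0:ℝ)..z, ((2/3)*B*t^(3*a) - (4/3)*σ*t^(a-1)))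
      = (2/3)*B*(z^(3*a+1)/(3*a+1)) - (4/3)*σ*(z^a/a) := by
    rw [integral_sub ((intervalIntegrable_rpow' (by linarith)).const_mul _)
      ((intervalIntegrable_rpow' (by linarith)).const_mul _),
      intervalIntegral.integral_const_mul, intervalIntegral.integral_const_mul,
      integral_rpow0 (by linarith), integral_rpow0 (by linarith),
      show a - 1 + 1 = a by ring]
  rw [hval] at hlow
  have e : (2/3)*B*(z^(3*a+1)/(3*a+1)) - (4/3)*σ*(z^a/a)
      = (2/3)*(B*z^(3*a+1)/(3*a+1)) - (1/3)*(4*(σ*z^a/a)) := by ring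
  rw [e] at hlow
  linarith

lemma F_split (ha : 0 < a) (hv : Continuous v) (x y : ℝ) :
    Fv a B σ v y = Fv a B σ v x + ∫ t in x..y, kk a B σ v t := by
  rw [Fv, Fv, intervalIntegral.integral_add_adjacent_intervals (kk_int ha hv 0 x)
    (kk_int ha hv x y)]

lemma g_nonneg (hB : 0 < B) (hz : 0 < z) (hσz : σ ≤ B * z ^ (1+2*a)) (ha : 0 < a)
    {t : ℝ} (ht : z ≤ t) : 0 ≤ B * t ^ (1+2*a) - σ := by
  have h1 : z ^ (1+2*a) ≤ t ^ (1+2*a) := Real.rpow_le_rpow hz.le ht (by linarith)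
  nlinarith

lemma F_mono (ha : 0 < a) (hB : 0 < B) (hσ : 0 ≤ σ) (hv : Continuous v) (hz : 0 < z)
    (hσz : σ ≤ B * z ^ (1+2*a)) {x y : ℝ} (hx : z ≤ x) (hxy : x ≤ y)
    (hvnn : ∀ t ∈ Icc x y, 0 ≤ v t) : Fv a B σ v x ≤ Fv a B σ v y := by
  rw [F_split ha hv x y]
  have h0 : 0 ≤ ∫ t in x..y, kk a B σ v t := by
    apply intervalIntegral.integral_nonneg hxy
    intro t ht
    have htnn : (0:ℝ) ≤ t := le_trans (hz.le.trans hx) ht.1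
    exact mul_nonneg (Real.rpow_nonneg htnn _)
      (mul_nonneg (g_nonneg hB hz hσz ha (hx.trans ht.1)) (hvnn t ht))
  linarith

lemma v_half (ha : 0 < a) (ha1 : a < 1) (hB : 0 < B) (hσ : 0 ≤ σ) (hv : Continuous v)
    (hveq : ∀ ζ, 0 ≤ ζ → v ζ = 1 + Iv a B σ v ζ) (hz : 0 < z)
    (hGz : Gw a B σ z ≤ 1/4) (hσz : σ ≤ B * z ^ (1+2*a))
    (hσz2 : 4 * (σ * z ^ a / a) ≤ B * z ^ (3*a+1) / (3*a+1)) :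
    ∀ ζ, z ≤ ζ → 1/2 ≤ v ζ := by
  have hvb := v_bounds ha ha1 hB hσ hv hveq hz hGz
  have hvlb : ∀ ζ ∈ Icc (0:ℝ) z, 2/3 ≤ v ζ := by
    intro ζ hζ
    have := abs_le.mp (hvb ζ hζ)
    linarith [this.1]
  by_contra hcon
  push_neg at hcon
  obtain ⟨ζ₁, hζ₁, hv₁⟩ := hcon
  have hclosed : IsClosed {x : ℝ | x ∈ Ici z ∧ v x ≤ 1/2} := by
    have he : {x : ℝ | x ∈ Ici z ∧ v x ≤ 1/2} = Ici z ∩ v ⁻¹' (Iic (1/2)) := by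
      ext x
      simp [mem_setOf_eq, mem_inter_iff, mem_preimage, mem_Iic]
    rw [he]
    exact isClosed_Ici.inter (isClosed_Iic.preimage hv)
  have hne : {x : ℝ | x ∈ Ici z ∧ v x ≤ 1/2}.Nonempty := ⟨ζ₁, hζ₁, hv₁.le⟩
  have hbdd : BddBelow {x : ℝ | x ∈ Ici z ∧ v x ≤ 1/2} := ⟨z, fun x hx => hx.1⟩
  set T := sInf {x : ℝ | x ∈ Ici z ∧ v x ≤ 1/2} with hTdef
  have hTS : T ∈ {x : ℝ | x ∈ Ici z ∧ v x ≤ 1/2} := hclosed.csInf_mem hne hbdd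
  have hTz : z ≤ T := hTS.1
  have hvz : 2/3 ≤ v z := hvlb z ⟨hz.le, le_rfl⟩
  have hzT : z < T := by
    rcases eq_or_lt_of_le hTz with h | h
    · exfalso
      have := hTS.2
      rw [← h] at this
      linarith
    · exact h
  have hIco : ∀ x, z ≤ x → x < T → 1/2 ≤ v x := by
    intro x hx hxT
    by_contra hxc
    push_neg at hxc
    have hmem : x ∈ {x : ℝ | x ∈ Ici z ∧ v x ≤ 1/2} := ⟨hx, hxc.le⟩
    exact absurd (csInf_le hbdd hmem) (not_le.mpr hxT)
  have hFzpos := Fz_lb ha ha1 hB hσ hv hveq hz hGz hσz2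
  have hmono : MonotoneOn v (Icc z T) := by
    refine monotoneOn_of_deriv_nonneg (convex_Icc z T) hv.continuousOn ?_ ?_
    · intro x hx
      rw [interior_Icc] at hx
      exact (hasDerivAt_v ha ha1 hv hveq (hz.trans hx.1)).differentiableAt.differentiableWithinAt
    · intro x hx
      rw [interior_Icc] at hx
      have hxpos : 0 < x := hz.trans hx.1
      rw [deriv_v ha ha1 hv hveq hxpos]
      have hFx : 0 ≤ Fv a B σ v x := by
        have h2 : Fv a B σ v z ≤ Fv a B σ v x := by
          refine F_mono ha hB hσ hv hz hσz le_rfl hx.1.le ?_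
          intro t ht
          exact le_trans (by norm_num) (hIco t ht.1 (lt_of_le_of_lt ht.2 hx.2))
        have h3 : (0:ℝ) ≤ B * z^(3*a+1)/(3*a+1)/3 := by positivity
        linarith
      exact mul_nonneg (Real.rpow_nonneg hxpos.le _) hFx
  have hfin := hmono ⟨le_rfl, hTz⟩ ⟨hTz, le_rfl⟩ hTz
  have := hTS.2
  linarith

lemma F_lb4 (ha : 0 < a) (ha1 : a < 1) (hB : 0 < B) (hσ : 0 ≤ σ) (hv : Continuous v)
    (hveq : ∀ ζ, 0 ≤ ζ → v ζ = 1 + Iv a B σ v ζ) (hz : 0 < z)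
    (hGz : Gw a B σ z ≤ 1/4) (hσz : σ ≤ B * z ^ (1+2*a))
    (hσz2 : 4 * (σ * z ^ a / a) ≤ B * z ^ (3*a+1) / (3*a+1)) :
    ∀ ζ, 4*z ≤ ζ → B/(8*(3*a+1)) * ζ^(3*a+1) ≤ Fv a B σ v ζ := by
  have hvhalf := v_half ha ha1 hB hσ hv hveq hz hGz hσz hσz2
  have h3a1 : (0:ℝ) < 3*a+1 := by linarith
  intro ζ hζ4
  have h2zζ : 2*z ≤ ζ := by linarith
  have hζpos : 0 < ζ := by linarith
  have hsplit := F_split (B := B) (σ := σ) ha hv (2*z) ζ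
  have hF2z : 0 ≤ Fv a B σ v (2*z) := by
    have h1 := Fz_lb ha ha1 hB hσ hv hveq hz hGz hσz2
    have h2 : Fv a B σ v z ≤ Fv a B σ v (2*z) := by
      refine F_mono ha hB hσ hv hz hσz le_rfl (by linarith) ?_
      intro t ht
      linarith [hvhalf t ht.1]
    have h3 : (0:ℝ) ≤ B * z^(3*a+1)/(3*a+1)/3 := by
      have := Real.rpow_nonneg hz.le (3*a+1)
      positivity
    linarith
  have hint_lb : (∫ t in 2*z..ζ, (B/4) * t^(3*a)) ≤ ∫ t in 2*z..ζ, kk a B σ v t := by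
    refine integral_mono_on h2zζ ((intervalIntegrable_rpow' (by linarith)).const_mul _)
      (kk_int ha hv _ _) ?_
    intro t ht
    have ht2z : 2*z ≤ t := ht.1
    have htpos : 0 < t := by linarith
    have hX : (0:ℝ) ≤ t ^ (a-1) := Real.rpow_nonneg htpos.le _
    have hP : (0:ℝ) ≤ t ^ (1+2*a) := Real.rpow_nonneg htpos.le _
    have hXP : t ^ (a-1) * t ^ (1+2*a) = t ^ (3*a) := by
      rw [rpow_mul_rpow htpos.le (by linarith)]
      congr 1
      ring
    have hσt : σ ≤ B * t ^ (1+2*a) / 2 := by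
      have ht2 : z ≤ t/2 := by linarith
      have e5 : (t/2 : ℝ) ^ (1+2*a) = t^(1+2*a) * (1/2:ℝ)^(1+2*a) := by
        rw [show (t/2 : ℝ) = t * (1/2) by ring, Real.mul_rpow htpos.le (by norm_num)]
      have e6 : ((1/2:ℝ))^(1+2*a) ≤ 1/2 := by
        have := Real.rpow_le_rpow_of_exponent_ge (by norm_num : (0:ℝ) < 1/2)
          (by norm_num) (by linarith : (1:ℝ) ≤ 1+2*a)
        rwa [Real.rpow_one] at this
      have e7 : z^(1+2*a) ≤ (t/2)^(1+2*a) := Real.rpow_le_rpow hz.le ht2 (by linarith)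
      have e8 : (t/2:ℝ)^(1+2*a) ≤ t^(1+2*a) * (1/2) := by
        rw [e5]
        exact mul_le_mul_of_nonneg_left e6 hP
      calc σ ≤ B * z^(1+2*a) := hσz
        _ ≤ B * (t/2)^(1+2*a) := mul_le_mul_of_nonneg_left e7 hB.le
        _ ≤ B * (t^(1+2*a) * (1/2)) := mul_le_mul_of_nonneg_left e8 hB.le
        _ = B * t^(1+2*a)/2 := by ring
    have hvt : 1/2 ≤ v t := hvhalf t (by linarith)
    have hg2 : 0 ≤ B * t^(1+2*a)/2 := by positivity
    have hmul : (B * t^(1+2*a)/2) * (1/2) ≤ (B * t^(1+2*a) - σ) * v t := by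
      apply mul_le_mul (by linarith) hvt (by norm_num) (by linarith)
    have h9 : t^(a-1) * ((B * t^(1+2*a)/2) * (1/2))
        ≤ t^(a-1) * ((B * t^(1+2*a) - σ) * v t) := mul_le_mul_of_nonneg_left hmul hX
    have h10 : t^(a-1) * ((B * t^(1+2*a)/2) * (1/2))
        = (B/4) * (t^(a-1) * t^(1+2*a)) := by ring
    rw [h10, hXP] at h9
    exact h9
  have hval : (∫ t in 2*z..ζ, (B/4) * t^(3*a))
      = (B/4) * ((ζ^(3*a+1) - (2*z)^(3*a+1))/(3*a+1)) := by
    rw [intervalIntegral.integral_const_mul, integral_rpow (Or.inl (by linarith)),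
      show 3*a+1 = 3*a+1 by ring]
  have h2z_ub : (2*z)^(3*a+1) ≤ ζ^(3*a+1)/2 := by
    have ht2 : 2*z ≤ ζ/2 := by linarith
    have e5 : (ζ/2 : ℝ) ^ (3*a+1) = ζ^(3*a+1) * (1/2:ℝ)^(3*a+1) := by
      rw [show (ζ/2 : ℝ) = ζ * (1/2) by ring, Real.mul_rpow hζpos.le (by norm_num)]
    have e6 : ((1/2:ℝ))^(3*a+1) ≤ 1/2 := by
      have := Real.rpow_le_rpow_of_exponent_ge (by norm_num : (0:ℝ) < 1/2)
        (by norm_num) (by linarith : (1:ℝ) ≤ 3*a+1)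
      rwa [Real.rpow_one] at this
    have e7 : (2*z)^(3*a+1) ≤ (ζ/2)^(3*a+1) :=
      Real.rpow_le_rpow (by linarith) ht2 (by linarith)
    have hPz : (0:ℝ) ≤ ζ^(3*a+1) := Real.rpow_nonneg hζpos.le _
    calc (2*z)^(3*a+1) ≤ (ζ/2)^(3*a+1) := e7
      _ = ζ^(3*a+1) * (1/2:ℝ)^(3*a+1) := e5
      _ ≤ ζ^(3*a+1) * (1/2) := mul_le_mul_of_nonneg_left e6 hPz
      _ = ζ^(3*a+1)/2 := by ring
  have hq : (ζ^(3*a+1)/2)/(3*a+1) ≤ (ζ^(3*a+1) - (2*z)^(3*a+1))/(3*a+1) :=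
    (div_le_div_iff_of_pos_right h3a1).mpr (by linarith)
  have hne : (3*a+1:ℝ) ≠ 0 := h3a1.ne'
  calc B/(8*(3*a+1)) * ζ^(3*a+1) = (B/4) * ((ζ^(3*a+1)/2)/(3*a+1)) := by
        field_simp
        ring
    _ ≤ (B/4) * ((ζ^(3*a+1) - (2*z)^(3*a+1))/(3*a+1)) :=
        mul_le_mul_of_nonneg_left hq (by positivity)
    _ = ∫ t in 2*z..ζ, (B/4) * t^(3*a) := hval.symm
    _ ≤ ∫ t in 2*z..ζ, kk a B σ v t := hint_lb
    _ ≤ Fv a B σ v ζ := by rw [hsplit]; linarith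

lemma v_grow (ha : 0 < a) (ha1 : a < 1) (hB : 0 < B) (hσ : 0 ≤ σ) (hv : Continuous v)
    (hveq : ∀ ζ, 0 ≤ ζ → v ζ = 1 + Iv a B σ v ζ) (hz : 0 < z)
    (hGz : Gw a B σ z ≤ 1/4) (hσz : σ ≤ B * z ^ (1+2*a))
    (hσz2 : 4 * (σ * z ^ a / a) ≤ B * z ^ (3*a+1) / (3*a+1)) :
    ∀ Z, 4*z ≤ Z → B/(8*(3*a+1))/(2*a+2) * (Z^(2*a+2) - (4*z)^(2*a+2)) ≤ v Z := by
  intro Z hZ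
  have h4z : (0:ℝ) < 4*z := by linarith
  have hok_cont : ContinuousOn (ok a B σ v) (Icc (4*z) Z) := by
    apply (ok_contOn (B := B) (σ := σ) ha hv).mono
    intro t ht
    exact lt_of_lt_of_le h4z ht.1
  have hok_int : IntervalIntegrable (ok a B σ v) volume (4*z) Z := by
    apply ContinuousOn.intervalIntegrable
    rwa [uIcc_of_le hZ]
  have hftc : ∫ s in 4*z..Z, ok a B σ v s = v Z - v (4*z) := by
    apply integral_eq_sub_of_hasDerivAt _ hok_int
    intro s hs
    rw [uIcc_of_le hZ] at hs
    exact hasDerivAt_v ha ha1 hv hveq (lt_of_lt_of_le h4z hs.1)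
  have hFlb := F_lb4 ha ha1 hB hσ hv hveq hz hGz hσz hσz2
  have hmono_int : (∫ s in 4*z..Z, (B/(8*(3*a+1))) * s^(2*a+1)) ≤ ∫ s in 4*z..Z, ok a B σ v s := by
    refine integral_mono_on hZ ((intervalIntegrable_rpow' (by linarith)).const_mul _)
      hok_int ?_
    intro s hs
    have hspos : 0 < s := lt_of_lt_of_le h4z hs.1
    have e1 : s ^ (-a) * s ^ (3*a+1) = s ^ (2*a+1) := by
      rw [rpow_mul_rpow hspos.le (by linarith)]
      congr 1
      ring
    have h2 := hFlb s hs.1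
    have h3 : s^(-a) * (B/(8*(3*a+1)) * s^(3*a+1)) ≤ s^(-a) * Fv a B σ v s :=
      mul_le_mul_of_nonneg_left h2 (Real.rpow_nonneg hspos.le _)
    have h4 : s^(-a) * (B/(8*(3*a+1)) * s^(3*a+1)) = (B/(8*(3*a+1))) * (s^(-a) * s^(3*a+1)) := by
      ring
    rw [h4, e1] at h3
    exact h3
  have hval : (∫ s in 4*z..Z, (B/(8*(3*a+1))) * s^(2*a+1))
      = (B/(8*(3*a+1))) * ((Z^(2*a+2) - (4*z)^(2*a+2))/(2*a+2)) := by
    rw [intervalIntegral.integral_const_mul, integral_rpow (Or.inl (by linarith)),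
      show 2*a+1+1 = 2*a+2 by ring]
  have hv4z : 1/2 ≤ v (4*z) :=
    v_half ha ha1 hB hσ hv hveq hz hGz hσz hσz2 (4*z) (by linarith)
  have e2 : (B/(8*(3*a+1))) * ((Z^(2*a+2) - (4*z)^(2*a+2))/(2*a+2))
      = B/(8*(3*a+1))/(2*a+2) * (Z^(2*a+2) - (4*z)^(2*a+2)) := by ring
  rw [hval, e2] at hmono_int
  linarith [hftc, hmono_int, hv4z]

end Quant

end Stmt9Aux

theorem stmt9 (m B : ℝ) (hm : 3 < m) (hB : 0 < B) :
    ∃ σbar : ℝ, 0 < σbar ∧ ∀ σ : ℝ, 0 ≤ σ → σ ≤ σbar →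
      ∃ v : ℝ → ℝ, RegSol m B σ v ∧ (∀ ζ : ℝ, 0 ≤ ζ → 0 < v ζ) ∧
        Filter.Tendsto v Filter.atTop Filter.atTop := by
  have hm2 : (0:ℝ) < m - 2 := by linarith
  have hm2' : (1:ℝ) < m - 2 := by linarith
  set a : ℝ := 1/(m-2) with hadef
  have ha : 0 < a := by rw [hadef]; positivity
  have ha1 : a < 1 := by
    rw [hadef, div_lt_one hm2]
    linarith
  have hp : m/(m-2) = 1 + 2*a := by
    rw [hadef]
    field_simp
    ring
  set z : ℝ := min 1 (1/(8*B)) with hzdef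
  have hz : 0 < z := lt_min one_pos (by positivity)
  have hz1 : z ≤ 1 := min_le_left _ _
  have hzB : z ≤ 1/(8*B) := min_le_right _ _
  have hzp1 : 0 < z^(1+2*a) := Real.rpow_pos_of_pos hz _
  have hzp2 : 0 < z^(2*a+1) := Real.rpow_pos_of_pos hz _
  have h3a1 : (0:ℝ) < 3*a+1 := by linarith
  set σb : ℝ := min (a/(8*z)) (min (B * z^(1+2*a)) (a*B*z^(2*a+1)/(4*(3*a+1)))) with hσbdef
  have hσbpos : 0 < σb := by
    apply lt_min (div_pos ha (by linarith))
    apply lt_min (mul_pos hB hzp1)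
    exact div_pos (mul_pos (mul_pos ha hB) hzp2) (by linarith)
  refine ⟨σb, hσbpos, ?_⟩
  intro σ hσ0 hσb'
  obtain ⟨v, hv, hveq⟩ := Stmt9Aux.exists_sol (a := a) (B := B) (σ := σ) ha ha1 hB.le hσ0
  have hσ1 : σ ≤ a/(8*z) := hσb'.trans (by rw [hσbdef]; exact min_le_left _ _)
  have hσ2 : σ ≤ B * z^(1+2*a) :=
    hσb'.trans (by rw [hσbdef]; exact (min_le_right _ _).trans (min_le_left _ _))
  have hσ3 : σ ≤ a*B*z^(2*a+1)/(4*(3*a+1)) :=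
    hσb'.trans (by rw [hσbdef]; exact (min_le_right _ _).trans (min_le_right _ _))
  -- G bound
  have hGz : Stmt9Aux.Gw a B σ z ≤ 1/4 := by
    have hza : z ^ (2*a+2) ≤ z := by
      have := Real.rpow_le_rpow_of_exponent_ge hz hz1 (by linarith : (1:ℝ) ≤ 2*a+2)
      rwa [Real.rpow_one] at this
    have hnum : B * z ^ (2*a+2) ≤ 1/8 := by
      have h1 : B * z ^ (2*a+2) ≤ B * z := mul_le_mul_of_nonneg_left hza hB.le
      have h2 : B * z ≤ B * (1/(8*B)) := mul_le_mul_of_nonneg_left hzB hB.le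
      have h3 : B * (1/(8*B)) = 1/8 := by
        field_simp
      linarith
    have hden : (2:ℝ) ≤ (3*a+1)*(2*a+2) := by nlinarith
    have hpart1 : B * z ^ (2*a+2) / ((3*a+1)*(2*a+2)) ≤ (1/8)/2 := by
      apply div_le_div₀ (by norm_num) hnum (by norm_num) hden
    have hpart2 : σ * z / a ≤ 1/8 := by
      rw [div_le_iff₀ ha]
      have h1 : σ * z ≤ (a/(8*z)) * z := mul_le_mul_of_nonneg_right hσ1 hz.le
      have h2 : (a/(8*z)) * z = a/8 := by
        field_simp
      nlinarith
    unfold Stmt9Aux.Gw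
    linarith
  have hσz2 : 4 * (σ * z ^ a / a) ≤ B * z ^ (3*a+1) / (3*a+1) := by
    have hYnn : (0:ℝ) ≤ z ^ a := Real.rpow_nonneg hz.le _
    have e : z^(2*a+1) * z^a = z^(3*a+1) := by
      rw [Stmt9Aux.rpow_mul_rpow hz.le (by linarith)]
      congr 1
      ring
    have hσ3' : σ*(4*(3*a+1)) ≤ a*B*z^(2*a+1) := by
      rw [← le_div_iff₀ (by linarith : (0:ℝ) < 4*(3*a+1))]
      convert hσ3 using 1
      try ring
    rw [show 4*(σ*z^a/a) = (4*σ*z^a)/a by ring, div_le_div_iff₀ ha h3a1, ← e]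
    nlinarith [mul_le_mul_of_nonneg_right hσ3' hYnn]
  refine ⟨v, ⟨?_, ?_, ?_, ?_⟩, ?_, ?_⟩
  · exact Stmt9Aux.contDiffOn_v_Ici ha ha1 hB.le hσ0 hv hveq
  · exact Stmt9Aux.contDiffOn_v_Ioi ha ha1 hv hveq
  · intro ζ hζ
    have hode := Stmt9Aux.sol_ode ha ha1 hv hveq hζ
    rw [hp]
    have hdiv : deriv v ζ / (m-2) = deriv v ζ * a := by
      rw [hadef, mul_one_div]
    rw [hdiv]
    linarith
  · exact Stmt9Aux.sol_at0 hveq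
  · intro ζ hζ
    rcases le_or_gt ζ z with h | h
    · have h1 := Stmt9Aux.v_bounds ha ha1 hB hσ0 hv hveq hz hGz ζ ⟨hζ, h⟩
      have h2 := abs_le.mp h1
      linarith [h2.1]
    · have h1 := Stmt9Aux.v_half ha ha1 hB hσ0 hv hveq hz hGz hσ2 hσz2 ζ h.le
      linarith
  · have hgrow := Stmt9Aux.v_grow ha ha1 hB hσ0 hv hveq hz hGz hσ2 hσz2
    apply tendsto_atTop_mono' atTop (eventually_atTop.mpr ⟨4*z, fun Z hZ => hgrow Z hZ⟩)
    have h1 : Tendsto (fun Z : ℝ => Z^(2*a+2)) atTop atTop :=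
      tendsto_rpow_atTop (by linarith)
    have h2 : Tendsto (fun Z : ℝ => Z^(2*a+2) - (4*z)^(2*a+2)) atTop atTop := by
      simp only [sub_eq_add_neg]
      exact tendsto_atTop_add_const_right _ _ h1
    have hcpos : 0 < B/(8*(3*a+1))/(2*a+2) :=
      div_pos (div_pos hB (by linarith)) (by linarith)
    exact h2.const_mul_atTop hcpos
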